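/- For every integer n ≥ 1, the scheme of primitive n-th roots of unity over Z, namely μ_n minus the union of μ_d for proper divisors d of n, is isomorphic to Spec Z[1/n][T]/(Φ_n(T)), where Φ_n is the n-th cyclotomic polynomial; in particular it lies entirely over Spec Z[1/n] and is isomorphic to Spec Z[1/n, ζ_n]. -/

import Mathlib

open Polynomial

/-- Key arithmetic fact: some power of `∏_{d | n, d ≠ n} (X^d - 1)` lies in the ideal
`(n, Φ_n)` of `ℤ[X]`. -/
lemma aux_rad (n : ℕ) (hn : 1 ≤ n) :
    ∃ (k : ℕ) (c e : ℤ[X]),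
      (∏ d ∈ n.properDivisors, ((X : ℤ[X]) ^ d - 1)) ^ k
        = (n : ℤ[X]) * c + cyclotomic n ℤ * e := by
  set f : ℤ[X] := ∏ d ∈ n.properDivisors, ((X : ℤ[X]) ^ d - 1) with hf
  have hrad : f ∈ (Ideal.span {(n : ℤ[X]), cyclotomic n ℤ}).radical := by
    rw [Ideal.radical_eq_sInf]
    refine Submodule.mem_sInf.mpr ?_
    rintro J ⟨hIJ, hJ⟩
    have hnJ : (n : ℤ[X]) ∈ J := hIJ (Ideal.subset_span (by simp))
    have hΦJ : cyclotomic n ℤ ∈ J := hIJ (Ideal.subset_span (by simp))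
    -- pass to the quotient domain K
    set K := ℤ[X] ⧸ J with hK
    haveI : Ideal.IsPrime J := hJ
    have hnK : ((n : ℕ) : K) = 0 := by
      have := Ideal.Quotient.eq_zero_iff_mem.mpr hnJ
      simpa using this
    set p := ringChar K with hp
    have hpn : p ∣ n := (CharP.cast_eq_zero_iff K p n).mp hnK
    have hn0 : n ≠ 0 := by omega
    have hpprime : p.Prime := by
      rcases CharP.char_is_prime_or_zero K p with h | h
      · exact h
      · exfalso; rw [h] at hpn; simp [Nat.zero_dvd] at hpn; omega
    haveI : Fact p.Prime := ⟨hpprime⟩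
    set v := n.factorization p with hv
    set m := n / p ^ v with hm
    have hmn : m * p ^ v = n := by
      rw [hm, hv]
      have := Nat.ordProj_mul_ordCompl_eq_self n p
      exact (Nat.mul_comm _ _).trans this
    have hmdvd : m ∣ n := ⟨p ^ v, hmn.symm⟩
    have hvpos : 0 < v := hpprime.factorization_pos_of_dvd hn0 hpn
    have hmne : m ≠ n := by
      intro h
      have : p ^ v = 1 := by
        have hmpos : 0 < m := Nat.pos_of_dvd_of_pos hmdvd (by omega)
        nlinarith [hmn, h]
      have := Nat.one_lt_pow hvpos.ne' hpprime.one_lt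
      omega
    have hmmem : m ∈ n.properDivisors := Nat.mem_properDivisors.mpr
      ⟨hmdvd, lt_of_le_of_ne (Nat.le_of_dvd (by omega) hmdvd) hmne⟩
    -- the image x of X in K satisfies x^n = 1
    set x : K := Ideal.Quotient.mk J X with hx
    have hXn : x ^ n - 1 = 0 := by
      have hmem : (X : ℤ[X]) ^ n - 1 ∈ J := by
        obtain ⟨r, hr⟩ := cyclotomic.dvd_X_pow_sub_one n ℤ
        rw [hr]; exact Ideal.mul_mem_right _ _ hΦJ
      have := Ideal.Quotient.eq_zero_iff_mem.mpr hmem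
      simpa [hx] using this
    have hxm : x ^ m - 1 = 0 := by
      have h1 : (x ^ m - 1) ^ p ^ v = 0 := by
        rw [sub_pow_char_pow, ← pow_mul, hmn, one_pow, hXn]
      exact pow_eq_zero_iff (pow_ne_zero v hpprime.pos.ne') |>.mp h1
    have hXmJ : (X : ℤ[X]) ^ m - 1 ∈ J := by
      rw [← Ideal.Quotient.eq_zero_iff_mem]
      simpa [hx] using hxm
    obtain ⟨r, hr⟩ := Finset.dvd_prod_of_mem (fun d => ((X : ℤ[X]) ^ d - 1)) hmmem
    rw [hf, hr]
    exact Ideal.mul_mem_right _ _ hXmJ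
  obtain ⟨k, hk⟩ := Ideal.mem_radical_iff.mp hrad
  obtain ⟨c, e, hce⟩ := Ideal.mem_span_pair.mp hk
  exact ⟨k, c, e, by rw [← hce]; ring⟩

/-- `X^n - 1 = Φ_n * ∏_{d | n, d ≠ n} Φ_d` over any commutative ring. -/
lemma aux_fact (n : ℕ) (hn : 1 ≤ n) (S : Type*) [CommRing S] :
    (X : S[X]) ^ n - 1 = cyclotomic n S * ∏ d ∈ n.properDivisors, cyclotomic d S := by
  rw [← prod_cyclotomic_eq_X_pow_sub_one (by omega) S,
    ← Nat.insert_self_properDivisors (by omega : n ≠ 0),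
    Finset.prod_insert Nat.self_notMem_properDivisors]

/-- `∏_{d | n, d ≠ n} Φ_d` divides `∏_{d | n, d ≠ n} (X^d - 1)` over `ℤ`. -/
lemma aux_gdvdf (n : ℕ) :
    (∏ d ∈ n.properDivisors, cyclotomic d ℤ)
      ∣ ∏ d ∈ n.properDivisors, ((X : ℤ[X]) ^ d - 1) :=
  Finset.prod_dvd_prod_of_dvd _ _ (fun d _ => cyclotomic.dvd_X_pow_sub_one d ℤ)

set_option maxHeartbeats 1000000 in
theorem stmt_7 (n : ℕ) (hn : 1 ≤ n) (R : Type) [CommRing R] [IsLocalization.Away (n : ℤ) R] :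
    Nonempty
      (Localization.Away
          ((Ideal.Quotient.mk (Ideal.span {(X : ℤ[X]) ^ n - 1}))
            (∏ d ∈ n.properDivisors, ((X : ℤ[X]) ^ d - 1))) ≃+*
        (R[X] ⧸ Ideal.span {cyclotomic n R})) := by
  classical
  set f : ℤ[X] := ∏ d ∈ n.properDivisors, ((X : ℤ[X]) ^ d - 1) with hfdef
  set I : Ideal ℤ[X] := Ideal.span {(X : ℤ[X]) ^ n - 1} with hIdef
  set mkA : ℤ[X] →+* ℤ[X] ⧸ I := Ideal.Quotient.mk I with hmkA
  set JR : Ideal R[X] := Ideal.span {cyclotomic n R} with hJRdef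
  set mkB : R[X] →+* R[X] ⧸ JR := Ideal.Quotient.mk JR with hmkB
  set θ : ℤ[X] →+* R[X] := mapRingHom (algebraMap ℤ R) with hθ
  set φ : ℤ[X] →+* R[X] ⧸ JR := mkB.comp θ with hφ
  -- basic facts
  have hθΦ : θ (cyclotomic n ℤ) = cyclotomic n R := map_cyclotomic n (algebraMap ℤ R)
  have hφΦ : φ (cyclotomic n ℤ) = 0 := by
    rw [hφ, RingHom.comp_apply, hθΦ]
    exact Ideal.Quotient.eq_zero_iff_mem.mpr (Ideal.subset_span rfl)
  have hφXn : φ ((X : ℤ[X]) ^ n - 1) = 0 := by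
    have : φ ((X : ℤ[X]) ^ n - 1)
        = φ (cyclotomic n ℤ) * φ (∏ d ∈ n.properDivisors, cyclotomic d ℤ) := by
      rw [← map_mul, ← aux_fact n hn ℤ]
    rw [this, hφΦ, zero_mul]
  -- the ring hom ψ : A → B
  set ψ : (ℤ[X] ⧸ I) →+* R[X] ⧸ JR := Ideal.Quotient.lift I φ (by
    intro a ha
    rw [hIdef, Ideal.mem_span_singleton] at ha
    obtain ⟨r, rfl⟩ := ha
    rw [map_mul, hφXn, zero_mul]) with hψdef
  have hψ : ∀ p : ℤ[X], ψ (mkA p) = φ p := fun p => Ideal.Quotient.lift_mk I _ _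
  letI : Algebra (ℤ[X] ⧸ I) (R[X] ⧸ JR) := ψ.toAlgebra
  have halg : (algebraMap (ℤ[X] ⧸ I) (R[X] ⧸ JR)) = ψ := rfl
  -- units in B
  have hn0 : n ≠ 0 := by omega
  have hxpow : φ X ^ n = 1 := by
    have := hφXn
    rw [map_sub, map_pow, map_one, sub_eq_zero] at this
    exact this
  have hxunit : IsUnit (φ X) := IsUnit.of_pow_eq_one hxpow hn0
  have hnunitR : IsUnit ((n : ℤ[X]).map (algebraMap ℤ R)) := by
    have h1 : IsUnit (algebraMap ℤ R (n : ℤ)) := IsLocalization.Away.algebraMap_isUnit (n : ℤ)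
    have h2 : ((n : ℤ[X]).map (algebraMap ℤ R)) = C (algebraMap ℤ R (n : ℤ)) := by
      simp [Polynomial.C_eq_natCast]
    rw [h2]
    exact h1.map C
  have hnunit : IsUnit (φ (n : ℤ[X])) := by
    rw [hφ, RingHom.comp_apply]
    exact (hnunitR).map mkB
  -- derivative identity gives that g := ∏ Φ_d is a unit in B
  have hgunit : IsUnit (φ (∏ d ∈ n.properDivisors, cyclotomic d ℤ)) := by
    have hder := congrArg derivative (aux_fact n hn ℤ)
    rw [derivative_sub, derivative_one, derivative_X_pow, sub_zero, derivative_mul] at hder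
    have hφd := congrArg φ hder
    simp only [map_add, map_mul, map_pow] at hφd
    rw [hφΦ, zero_mul, add_zero] at hφd
    have hunit : IsUnit (φ (C (n : ℤ)) * φ X ^ (n - 1)) := by
      refine IsUnit.mul ?_ (hxunit.pow _)
      have hC : (C (n : ℤ) : ℤ[X]) = (n : ℤ[X]) := by simp [Polynomial.C_eq_natCast]
      rw [hC]; exact hnunit
    rw [hφd] at hunit
    exact isUnit_of_mul_isUnit_right hunit
  have hcycunit : ∀ d ∈ n.properDivisors, IsUnit (φ (cyclotomic d ℤ)) := by
    intro d hd
    exact isUnit_of_dvd_unit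
      (map_dvd φ (Finset.dvd_prod_of_mem (fun d => cyclotomic d ℤ) hd)) hgunit
  have hfunit : IsUnit (φ f) := by
    rw [hfdef, map_prod]
    refine Finset.prod_induction _ IsUnit (fun a b => IsUnit.mul) isUnit_one ?_
    intro d hd
    have hdpos : 0 < d := Nat.pos_of_mem_properDivisors hd
    rw [← prod_cyclotomic_eq_X_pow_sub_one hdpos ℤ, map_prod]
    refine Finset.prod_induction _ IsUnit (fun a b => IsUnit.mul) isUnit_one ?_
    intro e he
    refine hcycunit e (Nat.mem_properDivisors.mpr ?_)
    obtain ⟨hed, hd0⟩ := Nat.mem_divisors.mp he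
    obtain ⟨hdn, hdltn⟩ := Nat.mem_properDivisors.mp hd
    exact ⟨hed.trans hdn, lt_of_le_of_lt (Nat.le_of_dvd hdpos hed) hdltn⟩
  -- the radical fact
  obtain ⟨k, c, e, hkce⟩ := aux_rad n hn
  have hinj : Function.Injective θ := by
    rw [hθ]
    refine Polynomial.map_injective _ ?_
    refine IsLocalization.injective (M := Submonoid.powers ((n : ℤ))) R
      (powers_le_nonZeroDivisors_of_noZeroDivisors ?_)
    exact_mod_cast hn0
  rw [← hfdef] at hkce
  have hfk : φ f ^ k = φ ((n : ℤ[X])) * φ c := by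
    have h := congrArg φ hkce
    rw [map_pow, map_add, map_mul, map_mul, hφΦ, zero_mul, add_zero] at h
    exact h
  set M : Submonoid ℤ := Submonoid.powers ((n : ℤ)) with hM
  haveI hloc : IsLocalization.Away (mkA f) (R[X] ⧸ JR) := by
    constructor
    constructor
    · -- map_units'
      rintro ⟨y, m, rfl⟩
      show IsUnit (algebraMap (ℤ[X] ⧸ I) (R[X] ⧸ JR) (mkA f ^ m))
      rw [halg, ← map_pow, hψ, map_pow]
      exact hfunit.pow m
    · -- surj'
      intro z
      obtain ⟨p, rfl⟩ := Ideal.Quotient.mk_surjective (I := JR) z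
      obtain ⟨⟨b, m, rfl⟩, hb⟩ := IsLocalization.integerNormalization_map_to_map M p
      set q : ℤ[X] := IsLocalization.integerNormalization M p with hq
      have hb2 : θ q = ((n : ℤ) ^ m : ℤ) • p := by rw [hθ]; exact hb
      have hb' : φ q = ((n : ℤ) ^ m : ℤ) • (Ideal.Quotient.mk JR p) := by
        rw [hφ, RingHom.comp_apply, hb2, map_zsmul]
      refine ⟨(mkA (q * c ^ m), ⟨mkA f ^ (k * m), ⟨k * m, rfl⟩⟩), ?_⟩
      show Ideal.Quotient.mk JR p * algebraMap _ _ (mkA f ^ (k * m))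
        = algebraMap _ _ (mkA (q * c ^ m))
      rw [halg, ← map_pow, hψ, hψ, map_pow, map_mul, map_pow]
      calc Ideal.Quotient.mk JR p * φ f ^ (k * m)
          = Ideal.Quotient.mk JR p * (φ f ^ k) ^ m := by rw [← pow_mul]
        _ = Ideal.Quotient.mk JR p * (φ ((n : ℤ[X])) * φ c) ^ m := by rw [hfk]
        _ = (((n : ℤ) ^ m : ℤ) • (Ideal.Quotient.mk JR p)) * φ c ^ m := by
            rw [map_natCast φ, mul_pow, zsmul_eq_mul]
            push_cast
            ring
        _ = φ q * φ c ^ m := by rw [hb']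
    · -- exists_of_eq
      intro x y hxy
      obtain ⟨p, rfl⟩ := Ideal.Quotient.mk_surjective (I := I) x
      obtain ⟨p', rfl⟩ := Ideal.Quotient.mk_surjective (I := I) y
      rw [halg] at hxy
      have hφeq : φ p = φ p' := by
        have h1 := hψ p
        have h2 := hψ p'
        rw [hmkA] at h1 h2
        rw [← h1, ← h2, hxy]
      set u : ℤ[X] := p - p' with hu
      have hu0 : φ u = 0 := by rw [hu, map_sub, hφeq, sub_self]
      have hdvd : cyclotomic n R ∣ θ u := by
        rw [← Ideal.mem_span_singleton, ← hJRdef, ← Ideal.Quotient.eq_zero_iff_mem]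
        exact hu0
      obtain ⟨s, hs⟩ := hdvd
      obtain ⟨⟨b, m, rfl⟩, hsb⟩ := IsLocalization.integerNormalization_map_to_map M s
      set st : ℤ[X] := IsLocalization.integerNormalization M s with hst
      have hsb2 : θ st = ((n : ℤ) ^ m : ℤ) • s := by rw [hθ]; exact hsb
      have key : (n : ℤ[X]) ^ m * u = cyclotomic n ℤ * st := by
        apply hinj
        rw [map_mul, map_pow, map_natCast, map_mul, hθΦ, hsb2, hs, zsmul_eq_mul]
        push_cast
        ring
      set mkC : ℤ[X] →+* ℤ[X] ⧸ Ideal.span {cyclotomic n ℤ} :=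
        Ideal.Quotient.mk (Ideal.span {cyclotomic n ℤ}) with hmkC
      have hC0 : mkC (cyclotomic n ℤ) = 0 :=
        Ideal.Quotient.eq_zero_iff_mem.mpr (Ideal.subset_span rfl)
      have h1 : mkC (f ^ (k * m) * u) = 0 := by
        have hCk : mkC f ^ k = mkC ((n : ℤ[X])) * mkC c := by
          have h := congrArg mkC hkce
          rw [map_pow, map_add, map_mul, map_mul, hC0, zero_mul, add_zero] at h
          exact h
        calc mkC (f ^ (k * m) * u)
            = (mkC f ^ k) ^ m * mkC u := by rw [map_mul, map_pow, pow_mul]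
          _ = mkC c ^ m * (mkC ((n : ℤ[X]) ^ m * u)) := by
              rw [hCk, map_mul, map_pow]; ring
          _ = mkC c ^ m * mkC (cyclotomic n ℤ * st) := by rw [key]
          _ = 0 := by rw [map_mul, hC0, zero_mul, mul_zero]
      have hΦdvd : cyclotomic n ℤ ∣ f ^ (k * m) * u := by
        rw [← Ideal.mem_span_singleton, ← Ideal.Quotient.eq_zero_iff_mem]
        exact h1
      obtain ⟨w, hw⟩ := hΦdvd
      obtain ⟨h', hgh⟩ := aux_gdvdf n
      have h2 : f ^ (k * m + 1) * u = ((X : ℤ[X]) ^ n - 1) * (h' * w) := by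
        calc f ^ (k * m + 1) * u = f * (f ^ (k * m) * u) := by ring
          _ = f * (cyclotomic n ℤ * w) := by rw [hw]
          _ = ((∏ d ∈ n.properDivisors, cyclotomic d ℤ) * h')
              * (cyclotomic n ℤ * w) := by rw [hfdef, hgh]
          _ = (cyclotomic n ℤ * ∏ d ∈ n.properDivisors, cyclotomic d ℤ)
              * (h' * w) := by ring
          _ = ((X : ℤ[X]) ^ n - 1) * (h' * w) := by rw [← aux_fact n hn ℤ]
      refine ⟨⟨mkA f ^ (k * m + 1), ⟨k * m + 1, rfl⟩⟩, ?_⟩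
      show mkA f ^ (k * m + 1) * mkA p = mkA f ^ (k * m + 1) * mkA p'
      have h3 : mkA f ^ (k * m + 1) * (mkA p - mkA p') = 0 := by
        rw [← map_sub, ← hu, ← map_pow, ← map_mul, hmkA,
          Ideal.Quotient.eq_zero_iff_mem, h2, hIdef]
        exact Ideal.mul_mem_right _ _ (Ideal.subset_span rfl)
      have := sub_eq_zero.mp (by rw [mul_sub] at h3; exact h3)
      linear_combination this
  exact ⟨(IsLocalization.algEquiv (Submonoid.powers (mkA f))
    (Localization.Away (mkA f)) (R[X] ⧸ JR)).toRingEquiv⟩
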